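/- arXiv:2408.14742 — 3 statements merged into one kernel-verified Lean document; each statement's English description precedes it below -/
import Mathlib

section
/- Let d ≥ 1 and 1 < p < ∞, and let G, w ∈ ℝ^d. If for every v ∈ ℝ^d one has ⟨G − ‖v‖^{p-2} v, w − v⟩ ≥ 0, then G = ‖w‖^{p-2} w (with the convention that ‖v‖^{p-2} v = 0 when v = 0). -/
open RealInnerProductSpace
open Filter

lemma flux_continuousAt {E : Type*} [NormedAddCommGroup E] [InnerProductSpace ℝ E]
    {p : ℝ} (hp : 1 < p) (w : E) :
    ContinuousAt (fun v : E => (‖v‖ ^ (p - 2)) • v) w := by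
  rcases eq_or_ne w 0 with rfl | hw
  · -- continuity at 0 by squeeze
    have hF0 : (fun v : E => (‖v‖ ^ (p - 2)) • v) 0 = 0 := by simp
    simp only [ContinuousAt, smul_zero]
    have hg : Tendsto (fun v : E => ‖v‖ ^ (p - 1)) (nhds 0) (nhds 0) := by
      have h1 : ContinuousAt (fun x : ℝ => x ^ (p - 1)) 0 :=
        Real.continuousAt_rpow_const 0 (p - 1) (Or.inr (by linarith))
      have h2 : Tendsto (fun v : E => ‖v‖) (nhds (0 : E)) (nhds 0) := by
        simpa using continuous_norm.tendsto (0 : E)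
      have := h1.tendsto.comp h2
      simpa [Function.comp_def, Real.zero_rpow (by linarith : p - 1 ≠ 0)] using this
    refine squeeze_zero_norm (fun v => ?_) hg
    rcases eq_or_ne v 0 with rfl | hv
    · simp [Real.zero_rpow (by linarith : p - 1 ≠ 0)]
    · have hvpos : (0:ℝ) < ‖v‖ := norm_pos_iff.mpr hv
      rw [norm_smul, Real.norm_eq_abs, abs_of_nonneg (Real.rpow_nonneg (norm_nonneg v) _)]
      rw [← Real.rpow_one ‖v‖]
      rw [show (‖v‖ ^ (1:ℝ)) ^ (p-2) = ‖v‖ ^ (p-2) by rw [Real.rpow_one]]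
      rw [← Real.rpow_add hvpos]
      rw [show p - 2 + 1 = p - 1 by ring]
      simp
  · have h1 : ContinuousAt (fun v : E => ‖v‖ ^ (p - 2)) w := by
      have : ContinuousAt (fun x : ℝ => x ^ (p - 2)) ‖w‖ :=
        Real.continuousAt_rpow_const _ _ (Or.inl (norm_ne_zero_iff.mpr hw))
      exact this.comp continuous_norm.continuousAt
    exact h1.smul continuousAt_id


/-- Pointwise Minty trick for the p-Laplace flux map `F_p v = ‖v‖^(p-2) • v`
(with `F_p 0 = 0`): if `⟪G - F_p v, w - v⟫ ≥ 0` for every `v : ℝ^d`, then `G = F_p w`. -/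
theorem pLaplace_flux_minty (d : ℕ) (hd : 1 ≤ d) (p : ℝ) (hp : 1 < p)
    (G w : EuclideanSpace ℝ (Fin d))
    (h : ∀ v : EuclideanSpace ℝ (Fin d),
      0 ≤ ⟪G - (‖v‖ ^ (p - 2)) • v, w - v⟫) :
    G = (‖w‖ ^ (p - 2)) • w := by
  set F : EuclideanSpace ℝ (Fin d) → EuclideanSpace ℝ (Fin d) :=
    fun v => (‖v‖ ^ (p - 2)) • v with hF
  have key : ∀ ψ : EuclideanSpace ℝ (Fin d), ⟪G - F w, ψ⟫ ≤ 0 := by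
    intro ψ
    have c1 : Tendsto (fun t : ℝ => w + t • ψ) (nhds 0) (nhds w) := by
      have hc : Continuous (fun t : ℝ => w + t • ψ) := by fun_prop
      simpa using hc.tendsto 0
    have cF : Tendsto (fun t : ℝ => F (w + t • ψ)) (nhds 0) (nhds (F w)) :=
      (flux_continuousAt hp w).tendsto.comp c1
    have c3 : Tendsto (fun t : ℝ => ⟪G - F (w + t • ψ), ψ⟫) (nhds 0)
        (nhds ⟪G - F w, ψ⟫) :=
      (tendsto_const_nhds.sub cF).inner tendsto_const_nhds
    have hle : ∀ᶠ t in nhdsWithin (0:ℝ) (Set.Ioi 0),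
        ⟪G - F (w + t • ψ), ψ⟫ ≤ 0 := by
      filter_upwards [self_mem_nhdsWithin] with t ht
      have ht : (0:ℝ) < t := ht
      have := h (w + t • ψ)
      have hsimp : ⟪G - F (w + t • ψ), w - (w + t • ψ)⟫
          = -(t * ⟪G - F (w + t • ψ), ψ⟫) := by
        rw [show w - (w + t • ψ) = -(t • ψ) by abel]
        rw [inner_neg_right, real_inner_smul_right]
      rw [hsimp] at this
      nlinarith
    have ht : Tendsto (fun t : ℝ => ⟪G - F (w + t • ψ), ψ⟫)
        (nhdsWithin (0:ℝ) (Set.Ioi 0)) (nhds ⟪G - F w, ψ⟫) := by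
      exact c3.mono_left nhdsWithin_le_nhds
    exact le_of_tendsto ht hle
  have h0 : ⟪G - F w, G - F w⟫ ≤ 0 := key (G - F w)
  have h1 : G - F w = 0 := by
    have := real_inner_self_nonneg (x := G - F w)
    have : ⟪G - F w, G - F w⟫ = 0 := le_antisymm h0 this
    exact inner_self_eq_zero.mp (by exact_mod_cast this)
  have := sub_eq_zero.mp h1
  simpa [hF] using this
end

section
/- Let (X, 𝔄, μ) be a σ-finite measure space, d ≥ 1, 1 < p < ∞ and p′ = p/(p−1). Let w : X → ℝ^d be measurable with ∫_X ‖w‖^p dμ < ∞ and G : X → ℝ^d be measurable with ∫_X ‖G‖^{p′} dμ < ∞. Suppose that for every measurable v : X → ℝ^d with ∫_X ‖v‖^p dμ < ∞ one has ∫_X ⟨G(x) − F_p(v(x)), w(x) − v(x)⟩ dμ(x) ≥ 0 (the integrand being integrable by Hölder's inequality). Then G(x) = F_p(w(x)) for μ-almost every x ∈ X. -/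
open MeasureTheory RealInnerProductSpace

lemma flux_pow_aux {A : ℝ} (hA : 0 ≤ A) {p : ℝ} (hp : 1 < p) :
    A ^ (p - 1) = A ^ (p - 2) * A := by
  rcases eq_or_lt_of_le hA with h | h
  · rw [← h, Real.zero_rpow (by linarith), mul_zero]
  · nth_rewrite 3 [← Real.rpow_one A]
    rw [← Real.rpow_add h]
    ring_nf

lemma flux_mono_strict {E : Type*} [NormedAddCommGroup E] [InnerProductSpace ℝ E]
    {p : ℝ} (hp : 1 < p) (a b : E) :
    0 ≤ ⟪(‖a‖ ^ (p - 2)) • a - (‖b‖ ^ (p - 2)) • b, a - b⟫ ∧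
      (⟪(‖a‖ ^ (p - 2)) • a - (‖b‖ ^ (p - 2)) • b, a - b⟫ = 0 → a = b) := by
  set A := ‖a‖ with hA
  set B := ‖b‖ with hB
  set c : ℝ := ⟪a, b⟫ with hc
  have hA0 : 0 ≤ A := norm_nonneg a
  have hB0 : 0 ≤ B := norm_nonneg b
  have hexp : ⟪(A ^ (p - 2)) • a - (B ^ (p - 2)) • b, a - b⟫
      = (A ^ (p - 1) - B ^ (p - 1)) * (A - B) + (A ^ (p - 2) + B ^ (p - 2)) * (A * B - c) := by
    have h1 : ⟪a, a⟫ = A * A := by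
      rw [real_inner_self_eq_norm_mul_norm]
    have h2 : ⟪b, b⟫ = B * B := by
      rw [real_inner_self_eq_norm_mul_norm]
    have h3 : ⟪b, a⟫ = c := (real_inner_comm b a).symm
    rw [inner_sub_left, inner_sub_right, inner_sub_right, real_inner_smul_left,
      real_inner_smul_left, real_inner_smul_left, real_inner_smul_left,
      h1, h2, h3, ← hc, flux_pow_aux hA0 hp, flux_pow_aux hB0 hp]
    ring
  have ht1 : 0 ≤ (A ^ (p - 1) - B ^ (p - 1)) * (A - B) := by
    rcases le_total A B with hAB | hAB
    · have h1 : A ^ (p - 1) - B ^ (p - 1) ≤ 0 := by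
        simp only [sub_nonpos]; exact Real.rpow_le_rpow hA0 hAB (by linarith)
      nlinarith
    · exact mul_nonneg
        (by simp only [sub_nonneg]; exact Real.rpow_le_rpow hB0 hAB (by linarith))
        (by linarith)
  have ht2 : 0 ≤ (A ^ (p - 2) + B ^ (p - 2)) * (A * B - c) := by
    apply mul_nonneg
    · positivity
    · have := real_inner_le_norm a b
      simp only [sub_nonneg]
      linarith
  constructor
  · rw [hexp]; linarith
  · intro hz
    rw [hexp] at hz
    have h1 : (A ^ (p - 1) - B ^ (p - 1)) * (A - B) = 0 := by linarith
    have h2 : (A ^ (p - 2) + B ^ (p - 2)) * (A * B - c) = 0 := by linarith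
    have hABeq : A = B := by
      rcases lt_trichotomy A B with h | h | h
      · exfalso
        have := Real.rpow_lt_rpow hA0 h (by linarith : (0:ℝ) < p - 1)
        nlinarith
      · exact h
      · exfalso
        have := Real.rpow_lt_rpow hB0 h (by linarith : (0:ℝ) < p - 1)
        nlinarith
    rcases eq_or_lt_of_le hA0 with hA' | hA'
    · have ha : a = 0 := norm_eq_zero.mp (by rw [← hA, ← hA'])
      have hb : b = 0 := norm_eq_zero.mp (by rw [← hB, ← hABeq, ← hA'])
      rw [ha, hb]
    · have hpos : 0 < A ^ (p - 2) + B ^ (p - 2) := by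
        have := Real.rpow_pos_of_pos hA' (p - 2)
        positivity
      have hceq : c = A * B := by
        have := mul_eq_zero.mp h2
        rcases this with h | h
        · exact absurd h (ne_of_gt hpos)
        · linarith
      have : ⟪a, b⟫ = ‖a‖ * ‖b‖ := by rw [← hc, ← hA, ← hB]; exact hceq
      have hnb : ‖b‖ • a = ‖a‖ • b := inner_eq_norm_mul_iff_real.mp this
      rw [← hA, ← hB, ← hABeq] at hnb
      have hAne : A ≠ 0 := ne_of_gt hA'
      exact smul_right_injective E hAne hnb

lemma flux_norm {E : Type*} [NormedAddCommGroup E] [InnerProductSpace ℝ E]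
    {p : ℝ} (hp : 1 < p) (v : E) : ‖(‖v‖ ^ (p - 2)) • v‖ = ‖v‖ ^ (p - 1) := by
  rcases eq_or_ne v 0 with rfl | hv
  · simp [Real.zero_rpow (show p - 1 ≠ 0 by linarith)]
  · have h0 : (0:ℝ) < ‖v‖ := norm_pos_iff.mpr hv
    rw [norm_smul, Real.norm_rpow_of_nonneg (norm_nonneg v)]
    rw [Real.norm_eq_abs, abs_of_pos h0]
    nth_rewrite 2 [← Real.rpow_one ‖v‖]
    rw [← Real.rpow_add h0]
    ring_nf

lemma flux_inverse {E : Type*} [NormedAddCommGroup E] [InnerProductSpace ℝ E]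
    {p : ℝ} (hp : 1 < p) (g : E) :
    (‖(‖g‖ ^ (p / (p - 1) - 2)) • g‖ ^ (p - 2)) • ((‖g‖ ^ (p / (p - 1) - 2)) • g) = g := by
  set q := p / (p - 1) with hqdef
  set z : E := (‖g‖ ^ (q - 2)) • g with hzdef
  rcases eq_or_ne g 0 with rfl | hg
  · have hz0 : z = 0 := by rw [hzdef]; simp
    rw [hz0]; simp
  · have h0 : (0:ℝ) < ‖g‖ := norm_pos_iff.mpr hg
    have hp1 : (0:ℝ) < p - 1 := by linarith
    have hznorm : ‖z‖ = ‖g‖ ^ (q - 1) := by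
      show ‖(‖g‖ ^ (q - 2)) • g‖ = _
      rw [norm_smul, Real.norm_rpow_of_nonneg (norm_nonneg g), Real.norm_eq_abs,
        abs_of_pos h0]
      nth_rewrite 2 [← Real.rpow_one ‖g‖]
      rw [← Real.rpow_add h0]
      ring_nf
    show (‖z‖ ^ (p - 2)) • ((‖g‖ ^ (q - 2)) • g) = g
    rw [hznorm, smul_smul, ← Real.rpow_mul (norm_nonneg g), ← Real.rpow_add h0]
    have hq : (q - 1) * (p - 2) + (q - 2) = 0 := by
      rw [hqdef]
      field_simp
      ring
    rw [hq, Real.rpow_zero, one_smul]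

lemma flux_inverse_norm_pow {E : Type*} [NormedAddCommGroup E] [InnerProductSpace ℝ E]
    {p : ℝ} (hp : 1 < p) (g : E) :
    ‖(‖g‖ ^ (p / (p - 1) - 2)) • g‖ ^ p = ‖g‖ ^ (p / (p - 1)) := by
  set q := p / (p - 1) with hqdef
  have hp1 : (0:ℝ) < p - 1 := by linarith
  have hq1 : 1 < q := by rw [hqdef, lt_div_iff₀ hp1]; linarith
  rw [flux_norm hq1]
  rcases eq_or_ne g 0 with rfl | hg
  · rw [norm_zero, Real.zero_rpow (show q - 1 ≠ 0 by linarith),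
      Real.zero_rpow (show p ≠ 0 by linarith), Real.zero_rpow (show q ≠ 0 by linarith)]
  · have h0 : (0:ℝ) < ‖g‖ := norm_pos_iff.mpr hg
    rw [← Real.rpow_mul (norm_nonneg g)]
    congr 1
    rw [hqdef]
    field_simp
    ring

lemma flux_continuous {E : Type*} [NormedAddCommGroup E] [InnerProductSpace ℝ E]
    {p : ℝ} (hp : 1 < p) : Continuous (fun v : E => (‖v‖ ^ (p - 2)) • v) := by
  rw [continuous_iff_continuousAt]
  intro v₀
  rcases eq_or_ne v₀ 0 with rfl | hv
  · rw [ContinuousAt]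
    have h0 : ((‖(0:E)‖ ^ (p - 2)) • (0:E)) = 0 := by simp
    rw [h0]
    apply squeeze_zero_norm (a := fun v : E => ‖v‖ ^ (p - 1))
    · exact fun v => le_of_eq (flux_norm hp v)
    · have h1 : Filter.Tendsto (fun v : E => ‖v‖) (nhds 0) (nhds 0) := by
        simpa using continuous_norm.tendsto (0:E)
      have h2 : Filter.Tendsto (fun t : ℝ => t ^ (p - 1)) (nhds 0) (nhds 0) := by
        have := (Real.continuousAt_rpow_const 0 (p - 1) (Or.inr (by linarith))).tendsto
        simpa [Real.zero_rpow (show p - 1 ≠ 0 by linarith)] using this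
      exact h2.comp h1
  · have hn : ‖v₀‖ ≠ 0 := norm_ne_zero_iff.mpr hv
    exact (continuous_norm.continuousAt.rpow_const (Or.inl hn)).smul continuousAt_id

lemma memLp_ofReal_iff_int {X : Type*} [MeasurableSpace X] {μ : Measure X}
    {E : Type*} [NormedAddCommGroup E] {f : X → E}
    (hf : AEStronglyMeasurable f μ) {r : ℝ} (hr : 0 < r) :
    MemLp f (ENNReal.ofReal r) μ ↔ Integrable (fun x => ‖f x‖ ^ r) μ := by
  rw [← memLp_one_iff_integrable]
  have hne : ENNReal.ofReal r ≠ 0 := by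
    simp only [ne_eq, ENNReal.ofReal_eq_zero, not_le]; exact hr
  have h := memLp_norm_rpow_iff (p := ENNReal.ofReal r) (μ := μ) hf hne ENNReal.ofReal_ne_top
  rw [ENNReal.toReal_ofReal hr.le, ENNReal.div_self hne ENNReal.ofReal_ne_top] at h
  exact h.symm

/-- `L^p` Minty trick for the p-Laplace flux map `F_p v = ‖v‖^(p-2) • v` (with `F_p 0 = 0`):
on a σ-finite measure space, if `w ∈ L^p`, `G ∈ L^{p'}` (`p' = p/(p-1)`) and
`∫ ⟪G - F_p ∘ v, w - v⟫ dμ ≥ 0` for every measurable `v` with `∫ ‖v‖^p dμ < ∞`,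
then `G = F_p ∘ w` μ-almost everywhere. -/
theorem pLaplace_flux_minty_Lp {X : Type*} [MeasurableSpace X]
    (μ : Measure X) [SigmaFinite μ]
    (d : ℕ) (hd : 1 ≤ d) (p : ℝ) (hp : 1 < p)
    (w G : X → EuclideanSpace ℝ (Fin d))
    (hw_meas : Measurable w) (hG_meas : Measurable G)
    (hw_int : Integrable (fun x => ‖w x‖ ^ p) μ)
    (hG_int : Integrable (fun x => ‖G x‖ ^ (p / (p - 1))) μ)
    (h : ∀ v : X → EuclideanSpace ℝ (Fin d), Measurable v →
      Integrable (fun x => ‖v x‖ ^ p) μ →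
      0 ≤ ∫ x, ⟪G x - (‖v x‖ ^ (p - 2)) • v x, w x - v x⟫ ∂μ) :
    ∀ᵐ x ∂μ, G x = (‖w x‖ ^ (p - 2)) • w x := by
  have hp0 : (0:ℝ) < p := by linarith
  have hp1 : (0:ℝ) < p - 1 := by linarith
  set q : ℝ := p / (p - 1) with hqdef
  have hq1 : 1 < q := by rw [hqdef, lt_div_iff₀ hp1]; linarith
  have hq0 : (0:ℝ) < q := by linarith
  set P : ENNReal := ENNReal.ofReal p with hPdef
  set Q : ENNReal := ENNReal.ofReal q with hQdef
  -- the candidate function z with F_p ∘ z = G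
  set z : X → EuclideanSpace ℝ (Fin d) := fun x => (‖G x‖ ^ (q - 2)) • G x with hzdef
  have hz_meas : Measurable z := (flux_continuous hq1).measurable.comp hG_meas
  have hFpz : ∀ x, (‖z x‖ ^ (p - 2)) • z x = G x := fun x => flux_inverse hp (G x)
  have hz_int : Integrable (fun x => ‖z x‖ ^ p) μ := by
    have heq : (fun x => ‖z x‖ ^ p) = fun x => ‖G x‖ ^ q := by
      funext x
      exact flux_inverse_norm_pow hp (G x)
    rw [heq]
    exact hG_int
  -- Memℒp facts
  have hwP : MemLp w P μ :=
    (memLp_ofReal_iff_int hw_meas.aestronglyMeasurable hp0).mpr hw_int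
  have hzP : MemLp z P μ :=
    (memLp_ofReal_iff_int hz_meas.aestronglyMeasurable hp0).mpr hz_int
  have hGQ : MemLp G Q μ :=
    (memLp_ofReal_iff_int hG_meas.aestronglyMeasurable hq0).mpr hG_int
  -- the dominating function
  set s : X → ℝ := fun x => ‖w x‖ + ‖w x‖ + ‖z x‖ with hsdef
  have hs_nonneg : ∀ x, 0 ≤ s x := fun x => add_nonneg (add_nonneg (norm_nonneg _) (norm_nonneg _)) (norm_nonneg _)
  have hsP : MemLp s P μ := (hwP.norm.add hwP.norm).add hzP.norm
  set B : X → ℝ := fun x => (‖G x‖ + s x ^ (p - 1)) * s x with hBdef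
  have hBint : Integrable B μ := by
    have h2 : MemLp (fun x => s x ^ (p - 1)) Q μ := by
      have h3 := hsP.norm_rpow_div (ENNReal.ofReal (p - 1))
      rw [ENNReal.toReal_ofReal hp1.le] at h3
      have hPQ : P / ENNReal.ofReal (p - 1) = Q := by
        rw [hPdef, hQdef, hqdef, ENNReal.ofReal_div_of_pos hp1]
      rw [hPQ] at h3
      have heq : (fun x => s x ^ (p - 1)) = fun x => ‖s x‖ ^ (p - 1) := by
        funext x
        rw [Real.norm_eq_abs, abs_of_nonneg (hs_nonneg x)]
      rw [heq]
      exact h3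
    have h1 : MemLp (fun x => ‖G x‖ + s x ^ (p - 1)) Q μ := hGQ.norm.add h2
    have hone : (1 : ENNReal) / 1 = 1 / Q + 1 / P := by
      rw [hPdef, hQdef, one_div, one_div, one_div, ← ENNReal.ofReal_inv_of_pos hq0,
        ← ENNReal.ofReal_inv_of_pos hp0, ← ENNReal.ofReal_add (by positivity) (by positivity)]
      have hqp : q⁻¹ + p⁻¹ = 1 := by
        rw [hqdef]
        field_simp
        ring
      rw [hqp, ENNReal.ofReal_one, inv_one]
    have h4 := hsP.smul (r := 1) h1 (hpqr := ⟨by simpa [one_div] using hone.symm⟩)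
    rw [← memLp_one_iff_integrable]
    have hBeq : B = (fun x => ‖G x‖ + s x ^ (p - 1)) • s := by
      funext x
      simp [hBdef, smul_eq_mul]
    rw [hBeq]
    exact h4
  -- the general bound
  have hbound : ∀ (u : EuclideanSpace ℝ (Fin d)) (x : X), ‖u‖ ≤ s x →
      |⟪G x - (‖u‖ ^ (p - 2)) • u, z x - w x⟫| ≤ B x := by
    intro u x hu
    calc |⟪G x - (‖u‖ ^ (p - 2)) • u, z x - w x⟫|
        ≤ ‖G x - (‖u‖ ^ (p - 2)) • u‖ * ‖z x - w x‖ := abs_real_inner_le_norm _ _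
      _ ≤ (‖G x‖ + s x ^ (p - 1)) * s x := by
          apply mul_le_mul _ _ (norm_nonneg _) _
          · refine (norm_sub_le _ _).trans ?_
            apply add_le_add_right
            rw [flux_norm hp]
            exact Real.rpow_le_rpow (norm_nonneg u) hu (by linarith)
          · refine (norm_sub_le _ _).trans ?_
            show ‖z x‖ + ‖w x‖ ≤ ‖w x‖ + ‖w x‖ + ‖z x‖
            linarith [norm_nonneg (w x)]
          · have := Real.rpow_nonneg (hs_nonneg x) (p - 1)
            positivity
  -- limit function
  set f0 : X → ℝ := fun x => ⟪G x - (‖w x‖ ^ (p - 2)) • w x, z x - w x⟫ with hf0def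
  have hf0_nonneg : ∀ x, 0 ≤ f0 x := by
    intro x
    have := (flux_mono_strict hp (z x) (w x)).1
    rw [hFpz x] at this
    exact this
  have hf0_meas : Measurable f0 :=
    (hG_meas.sub ((flux_continuous hp).measurable.comp hw_meas)).inner
      (hz_meas.sub hw_meas)
  have hf0_int : Integrable f0 μ := by
    apply hBint.mono' hf0_meas.aestronglyMeasurable
    filter_upwards with x
    rw [Real.norm_eq_abs]
    refine hbound (w x) x ?_
    show ‖w x‖ ≤ ‖w x‖ + ‖w x‖ + ‖z x‖
    linarith [norm_nonneg (w x), norm_nonneg (z x)]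
  -- the test functions
  set v : ℕ → X → EuclideanSpace ℝ (Fin d) := fun n x => w x + ((1:ℝ)/(n+1)) • (z x - w x) with hvdef
  have ht_pos : ∀ n : ℕ, (0:ℝ) < 1/(n+1) := by
    intro n; positivity
  have hv_meas : ∀ n, Measurable (v n) :=
    fun n => hw_meas.add ((hz_meas.sub hw_meas).const_smul ((1:ℝ)/(n+1)))
  have hv_memLp : ∀ n, MemLp (v n) P μ :=
    fun n => hwP.add ((hzP.sub hwP).const_smul ((1:ℝ)/(n+1)))
  have hv_int : ∀ n, Integrable (fun x => ‖v n x‖ ^ p) μ :=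
    fun n => (memLp_ofReal_iff_int (hv_meas n).aestronglyMeasurable hp0).mp (hv_memLp n)
  have hv_norm_le : ∀ n x, ‖v n x‖ ≤ s x := by
    intro n x
    have h1 : (1:ℝ)/(n+1) ≤ 1 := by
      rw [div_le_one (by positivity)]
      simp
    calc ‖v n x‖ = ‖w x + ((1:ℝ)/(n+1)) • (z x - w x)‖ := rfl
      _ ≤ ‖w x‖ + ‖((1:ℝ)/(n+1)) • (z x - w x)‖ := norm_add_le _ _
      _ = ‖w x‖ + (1/(n+1)) * ‖z x - w x‖ := by
          rw [norm_smul, Real.norm_eq_abs, abs_of_pos (ht_pos n)]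
      _ ≤ ‖w x‖ + 1 * (‖z x‖ + ‖w x‖) := by
          apply add_le_add_right
          exact mul_le_mul h1 (norm_sub_le _ _) (norm_nonneg _) one_pos.le
      _ ≤ s x := by
          show _ ≤ ‖w x‖ + ‖w x‖ + ‖z x‖
          linarith
  -- key inequality for each n
  have key : ∀ n : ℕ, ∫ x, ⟪G x - (‖v n x‖ ^ (p - 2)) • v n x, z x - w x⟫ ∂μ ≤ 0 := by
    intro n
    have h0 := h (v n) (hv_meas n) (hv_int n)
    have heq : ∀ x : X, ⟪G x - (‖v n x‖ ^ (p - 2)) • v n x, w x - v n x⟫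
        = -(((1:ℝ)/(n+1)) * ⟪G x - (‖v n x‖ ^ (p - 2)) • v n x, z x - w x⟫) := by
      intro x
      have hs1 : w x - v n x = -(((1:ℝ)/(n+1)) • (z x - w x)) := by
        show w x - (w x + ((1:ℝ)/(n+1)) • (z x - w x)) = _
        abel
      rw [hs1, inner_neg_right, real_inner_smul_right]
    rw [integral_congr_ae (Filter.Eventually.of_forall heq), integral_neg,
      integral_const_mul] at h0
    have ht := ht_pos n
    nlinarith [h0, ht]
  -- dominated convergence
  have hDCT : Filter.Tendsto
      (fun n => ∫ x, ⟪G x - (‖v n x‖ ^ (p - 2)) • v n x, z x - w x⟫ ∂μ)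
      Filter.atTop (nhds (∫ x, f0 x ∂μ)) := by
    apply tendsto_integral_of_dominated_convergence B
    · intro n
      exact ((hG_meas.sub ((flux_continuous hp).measurable.comp
        (hv_meas n))).inner (hz_meas.sub hw_meas)).aestronglyMeasurable
    · exact hBint
    · intro n
      filter_upwards with x
      rw [Real.norm_eq_abs]
      exact hbound (v n x) x (hv_norm_le n x)
    · filter_upwards with x
      have htend : Filter.Tendsto (fun n : ℕ => (1:ℝ)/(n+1)) Filter.atTop (nhds 0) :=
        tendsto_one_div_add_atTop_nhds_zero_nat
      have h1 : Filter.Tendsto (fun n => v n x) Filter.atTop (nhds (w x)) := by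
        have h2 := htend.smul_const (z x - w x)
        rw [zero_smul] at h2
        have h3 := h2.const_add (w x)
        rw [add_zero] at h3
        exact h3
      have h2 : Filter.Tendsto (fun n => (‖v n x‖ ^ (p - 2)) • v n x) Filter.atTop
          (nhds ((‖w x‖ ^ (p - 2)) • w x)) :=
        ((flux_continuous hp).tendsto (w x)).comp h1
      exact (tendsto_const_nhds.sub h2).inner tendsto_const_nhds
  have hint_le : ∫ x, f0 x ∂μ ≤ 0 :=
    le_of_tendsto hDCT (Filter.Eventually.of_forall key)
  have hint_eq : ∫ x, f0 x ∂μ = 0 :=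
    le_antisymm hint_le (integral_nonneg hf0_nonneg)
  have hae : f0 =ᵐ[μ] 0 :=
    (integral_eq_zero_iff_of_nonneg hf0_nonneg hf0_int).mp hint_eq
  filter_upwards [hae] with x hx
  have hzw : z x = w x := by
    apply (flux_mono_strict hp (z x) (w x)).2
    rw [hFpz x]
    exact hx
  rw [← hFpz x, hzw]
end

section
/- Let T > 0, N ∈ ℕ with N ≥ 1, τ = T/N and t_k = kτ for k = 0, …, N. Let A : [0,T] → L²(ℝ^d) be Bochner measurable with ∫₀^T ‖A(s)‖²_{L²(ℝ^d)} ds < ∞, set Φ_k = ∫₀^{t_k} A(s) ds, and let Φ_τ : [0,T] → L²(ℝ^d) be the piecewise affine interpolant Φ_τ(t) = Φ_k + ((t − t_k)/τ)(Φ_{k+1} − Φ_k) for t ∈ [t_k, t_{k+1}), with Φ_τ(T) = Φ_N. Then ∫₀^T ‖Φ_τ(t) − ∫₀^t A(s) ds‖²_{L²(ℝ^d)} dt ≤ 2τ² ∫₀^T ‖A(s)‖²_{L²(ℝ^d)} ds. -/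
open MeasureTheory

/-- The piecewise affine interpolant of the running Bochner integral of `A` for the uniform
partition of mesh `τ`: on `[t_k, t_{k+1})` (where `t_k = k·τ` and `k = ⌊t/τ⌋`) it equals
`Φ_k + ((t - t_k)/τ) • (Φ_{k+1} - Φ_k)` with `Φ_k = ∫₀^{t_k} A(s) ds`, and at `t = T = N·τ`
it equals `Φ_N`. -/
noncomputable def affineInterpolant (d : ℕ)
    (A : ℝ → Lp ℝ 2 (volume : Measure (EuclideanSpace ℝ (Fin d)))) (τ t : ℝ) :
    Lp ℝ 2 (volume : Measure (EuclideanSpace ℝ (Fin d))) :=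
  (∫ s in (0:ℝ)..((⌊t / τ⌋₊ : ℝ) * τ), A s) +
    ((t - (⌊t / τ⌋₊ : ℝ) * τ) / τ) •
      ((∫ s in (0:ℝ)..(((⌊t / τ⌋₊ : ℝ) + 1) * τ), A s) -
        ∫ s in (0:ℝ)..((⌊t / τ⌋₊ : ℝ) * τ), A s)

/-- Elementary Cauchy–Schwarz for interval integrals of nonnegative functions. -/
lemma cs_aux {f : ℝ → ℝ} {a b : ℝ} (hab : a ≤ b) (hfnn : ∀ x, 0 ≤ f x)
    (hf : IntervalIntegrable f volume a b)
    (hf2 : IntervalIntegrable (fun x => f x ^ 2) volume a b) :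
    (∫ x in a..b, f x) ^ 2 ≤ (b - a) * ∫ x in a..b, f x ^ 2 := by
  rcases eq_or_lt_of_le hab with rfl | hab'
  · simp
  set I := ∫ x in a..b, f x ^ 2 with hIdef
  set J := ∫ x in a..b, f x with hJdef
  have hI0 : 0 ≤ I := intervalIntegral.integral_nonneg hab fun x _ => sq_nonneg _
  have hJ0 : 0 ≤ J := intervalIntegral.integral_nonneg hab fun x _ => hfnn x
  have key : ∀ ε : ℝ, 0 < ε → J ≤ ε * I + (b - a) * (1 / (4 * ε)) := by
    intro ε hε
    have h1 : J ≤ ∫ x in a..b, (ε * f x ^ 2 + 1 / (4 * ε)) := by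
      refine intervalIntegral.integral_mono_on hab hf
        ((hf2.const_mul ε).add intervalIntegrable_const) fun x _ => ?_
      rw [← sub_nonneg]
      have hrw : ε * f x ^ 2 + 1 / (4 * ε) - f x = (2 * ε * f x - 1) ^ 2 / (4 * ε) := by
        field_simp
        ring
      rw [hrw]
      positivity
    have h2 : (∫ x in a..b, (ε * f x ^ 2 + 1 / (4 * ε)))
        = ε * I + (b - a) * (1 / (4 * ε)) := by
      rw [intervalIntegral.integral_add (hf2.const_mul ε) intervalIntegrable_const,
        intervalIntegral.integral_const_mul, intervalIntegral.integral_const, smul_eq_mul]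
    linarith [h1, h2.le, h2.ge]
  rcases eq_or_lt_of_le hI0 with hIe | hIpos
  · have hJz : J ≤ 0 := by
      by_contra hc
      push_neg at hc
      have hba0 : b - a ≠ 0 := ne_of_gt (by linarith)
      have hJne : J ≠ 0 := ne_of_gt hc
      have hε : 0 < (b - a) / (2 * J) := div_pos (by linarith) (by linarith)
      have h := key _ hε
      rw [← hIe] at h
      have hcomp : (b - a) * (1 / (4 * ((b - a) / (2 * J)))) = J / 2 := by
        field_simp
        ring
      rw [hcomp] at h
      linarith
    have hJe : J = 0 := le_antisymm hJz hJ0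
    rw [hJe, ← hIe]
    norm_num
  · set s := Real.sqrt ((b - a) / I) with hsdef
    have hdivpos : 0 < (b - a) / I := div_pos (by linarith) hIpos
    have hspos : 0 < s := Real.sqrt_pos.2 hdivpos
    have hs2 : s ^ 2 = (b - a) / I := Real.sq_sqrt hdivpos.le
    have hsI : s ^ 2 * I = b - a := by rw [hs2]; field_simp
    have hkey := key (s / 2) (by positivity)
    have hbnd : (s / 2) * I + (b - a) * (1 / (4 * (s / 2))) = s * I := by
      rw [← hsI]
      field_simp
      ring
    rw [hbnd] at hkey
    nlinarith [mul_le_mul hkey hkey hJ0 (by positivity : (0:ℝ) ≤ s * I), hsI, hIpos]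

set_option maxHeartbeats 2000000 in
/-- Integrated estimate for the piecewise affine interpolant of the running Bochner integral:
with `τ = T/N`, `∫₀^T ‖Φ_τ(t) - ∫₀^t A(s) ds‖² dt ≤ 2τ² ∫₀^T ‖A(s)‖² ds`, where
`A : [0,T] → L²(ℝ^d)` is Bochner measurable with `∫₀^T ‖A(s)‖² ds < ∞`. -/
theorem affine_interpolant_L2_estimate (d : ℕ) (hd : 1 ≤ d)
    (T : ℝ) (hT : 0 < T) (N : ℕ) (hN : 1 ≤ N) (τ : ℝ) (hτ : τ = T / N)
    (A : ℝ → Lp ℝ 2 (volume : Measure (EuclideanSpace ℝ (Fin d))))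
    (hA_meas : AEStronglyMeasurable A (volume.restrict (Set.Ioc (0 : ℝ) T)))
    (hA_sq : IntervalIntegrable (fun s => ‖A s‖ ^ 2) volume 0 T) :
    (∫ t in (0:ℝ)..T, ‖affineInterpolant d A τ t - ∫ s in (0:ℝ)..t, A s‖ ^ 2)
      ≤ 2 * τ ^ 2 * ∫ s in (0:ℝ)..T, ‖A s‖ ^ 2 := by
  have hNpos : (0:ℝ) < (N:ℝ) := by exact_mod_cast Nat.lt_of_lt_of_le Nat.zero_lt_one hN
  have hτpos : 0 < τ := by rw [hτ]; positivity
  have hNτ : (N : ℝ) * τ = T := by rw [hτ]; field_simp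
  -- integrability on [0,T]
  have hf2T : IntegrableOn (fun s => ‖A s‖ ^ 2) (Set.Icc 0 T) volume :=
    (integrableOn_Icc_iff_integrableOn_Ioc (by simp)).2 hA_sq.1
  have hAT : IntegrableOn A (Set.Icc 0 T) volume := by
    refine (integrableOn_Icc_iff_integrableOn_Ioc (by simp)).2 ?_
    refine Integrable.mono'
      (g := fun s => (‖A s‖ ^ 2 + 1) / 2) ?_ hA_meas ?_
    · exact (hA_sq.1.add (integrable_const 1)).div_const 2
    · filter_upwards with s
      nlinarith [sq_nonneg (‖A s‖ - 1)]
  have hAsub : ∀ a b : ℝ, 0 ≤ a → a ≤ b → b ≤ T → IntervalIntegrable A volume a b := by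
    intro a b h0 hab hbT
    have hsub : Set.uIcc a b ⊆ Set.Icc 0 T := by
      rw [Set.uIcc_of_le hab]; exact Set.Icc_subset_Icc h0 hbT
    exact (hAT.mono_set hsub).intervalIntegrable
  have hf2sub : ∀ a b : ℝ, 0 ≤ a → a ≤ b → b ≤ T →
      IntervalIntegrable (fun s => ‖A s‖ ^ 2) volume a b := by
    intro a b h0 hab hbT
    have hsub : Set.uIcc a b ⊆ Set.Icc 0 T := by
      rw [Set.uIcc_of_le hab]; exact Set.Icc_subset_Icc h0 hbT
    exact (hf2T.mono_set hsub).intervalIntegrable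
  have hΦcont : ContinuousOn (fun t => ∫ s in (0:ℝ)..t, A s) (Set.Icc 0 T) := by
    have h := intervalIntegral.continuousOn_primitive_interval
      (a := 0) (b := T) (f := A) (μ := volume) (by rwa [Set.uIcc_of_le hT.le])
    rwa [Set.uIcc_of_le hT.le] at h
  set g : ℝ → ℝ := fun t => ‖affineInterpolant d A τ t - ∫ s in (0:ℝ)..t, A s‖ ^ 2 with hg
  set a : ℕ → ℝ := fun k => (k : ℝ) * τ with ha
  have key : ∀ k : ℕ, k < N → IntervalIntegrable g volume (a k) (a (k + 1)) ∧
      (∫ t in a k..a (k + 1), g t)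
        ≤ 2 * τ ^ 2 * ∫ s in a k..a (k + 1), ‖A s‖ ^ 2 := by
    intro k hk
    have h0a : 0 ≤ a k := by
      simp only [ha]; positivity
    have hba : a (k + 1) - a k = τ := by simp only [ha]; push_cast; ring
    have hab : a k ≤ a (k + 1) := by linarith
    have hbT : a (k + 1) ≤ T := by
      have hk1 : ((k:ℝ) + 1) ≤ (N : ℝ) := by exact_mod_cast Nat.succ_le_of_lt hk
      have : a (k + 1) = ((k:ℝ) + 1) * τ := by simp only [ha]; push_cast; ring
      rw [this, ← hNτ]
      nlinarith
    set I := ∫ s in a k..a (k + 1), ‖A s‖ ^ 2 with hIdef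
    have hI0 : 0 ≤ I :=
      intervalIntegral.integral_nonneg hab fun x _ => sq_nonneg _
    set Gk : ℝ → Lp ℝ 2 (volume : Measure (EuclideanSpace ℝ (Fin d))) := fun t =>
      (∫ s in (0:ℝ)..(a k), A s) +
        ((t - a k) / τ) • ((∫ s in (0:ℝ)..(a (k + 1)), A s) - ∫ s in (0:ℝ)..(a k), A s) -
        ∫ s in (0:ℝ)..t, A s with hGk
    have hfloor : ∀ t ∈ Set.Ioo (a k) (a (k + 1)), ⌊t / τ⌋₊ = k := by
      intro t ht
      have h0t : 0 ≤ t / τ := by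
        have h1 : 0 < t := lt_of_le_of_lt h0a ht.1
        positivity
      rw [Nat.floor_eq_iff h0t]
      constructor
      · rw [le_div_iff₀ hτpos]
        exact ht.1.le
      · rw [div_lt_iff₀ hτpos]
        have h2 : a (k + 1) = ((k:ℝ) + 1) * τ := by simp only [ha]; push_cast; ring
        have h3 := ht.2
        rw [h2] at h3
        linarith
    have hgH : ∀ t ∈ Set.Ioo (a k) (a (k + 1)), g t = ‖Gk t‖ ^ 2 := by
      intro t ht
      have h1 := hfloor t ht
      simp only [hg, affineInterpolant, hGk, h1, ha]
      push_cast
      ring_nf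
    -- continuity of the comparison function
    have hHcont : ContinuousOn (fun t => ‖Gk t‖ ^ 2) (Set.Icc (a k) (a (k + 1))) := by
      have hsub : Set.Icc (a k) (a (k + 1)) ⊆ Set.Icc 0 T := Set.Icc_subset_Icc h0a hbT
      have hΦ : ContinuousOn (fun t => ∫ s in (0:ℝ)..t, A s)
          (Set.Icc (a k) (a (k + 1))) := hΦcont.mono hsub
      have hG : ContinuousOn Gk (Set.Icc (a k) (a (k + 1))) := by
        refine ContinuousOn.sub ?_ hΦ
        refine continuousOn_const.add (ContinuousOn.fun_smul ?_ continuousOn_const)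
        exact (continuousOn_id.sub continuousOn_const).div_const τ
      exact (hG.norm.pow 2)
    have hHint : IntervalIntegrable (fun t => ‖Gk t‖ ^ 2) volume (a k) (a (k + 1)) := by
      apply ContinuousOn.intervalIntegrable
      rwa [Set.uIcc_of_le hab]
    have hbae : ∀ᵐ t : ℝ ∂volume, t ≠ a (k + 1) := by
      refine ae_iff.2 ?_
      have : {t : ℝ | ¬ t ≠ a (k + 1)} = {a (k + 1)} := by
        ext x; simp
      rw [this]
      exact measure_singleton _
    have hgint : IntervalIntegrable g volume (a k) (a (k + 1)) := by
      rw [intervalIntegrable_iff_integrableOn_Ioc_of_le hab]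
      refine (((intervalIntegrable_iff_integrableOn_Ioc_of_le hab).1 hHint)).congr ?_
      rw [Filter.EventuallyEq, ae_restrict_iff' measurableSet_Ioc]
      filter_upwards [hbae] with t htb ht
      exact (hgH t ⟨ht.1, lt_of_le_of_ne ht.2 htb⟩).symm
    refine ⟨hgint, ?_⟩
    have hint_eq : (∫ t in a k..a (k + 1), g t)
        = ∫ t in a k..a (k + 1), ‖Gk t‖ ^ 2 := by
      apply intervalIntegral.integral_congr_ae
      rw [Set.uIoc_of_le hab]
      filter_upwards [hbae] with t htb ht
      exact hgH t ⟨ht.1, lt_of_le_of_ne ht.2 htb⟩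
    -- pointwise bound
    have hpt : ∀ t ∈ Set.Icc (a k) (a (k + 1)),
        ‖Gk t‖ ^ 2 ≤ 2 * (t - a k) * I + 2 * ((t - a k) / τ) ^ 2 * τ * I := by
      intro t ht
      have hta : a k ≤ t := ht.1
      have htb : t ≤ a (k + 1) := ht.2
      have htT : t ≤ T := le_trans htb hbT
      have h0t : 0 ≤ t - a k := by linarith
      have hc0 : 0 ≤ (t - a k) / τ := by positivity
      have e1 : (∫ s in (0:ℝ)..(a (k + 1)), A s) - (∫ s in (0:ℝ)..(a k), A s)
          = ∫ s in a k..a (k + 1), A s :=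
        intervalIntegral.integral_interval_sub_left
          (hAsub 0 (a (k + 1)) le_rfl (le_trans h0a hab) hbT)
          (hAsub 0 (a k) le_rfl h0a (le_trans hab hbT))
      have e2 : (∫ s in (0:ℝ)..t, A s) - (∫ s in (0:ℝ)..(a k), A s)
          = ∫ s in a k..t, A s :=
        intervalIntegral.integral_interval_sub_left
          (hAsub 0 t le_rfl (le_trans h0a hta) htT)
          (hAsub 0 (a k) le_rfl h0a (le_trans hab hbT))
      have hGeq : Gk t = ((t - a k) / τ) • (∫ s in a k..a (k + 1), A s)
          - ∫ s in a k..t, A s := by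
        rw [hGk]
        simp only
        rw [← e1, ← e2]
        abel
      have hX : ‖∫ s in a k..t, A s‖ ≤ ∫ s in a k..t, ‖A s‖ :=
        intervalIntegral.norm_integral_le_integral_norm hta
      have hX0 : (0:ℝ) ≤ ‖∫ s in a k..t, A s‖ := norm_nonneg _
      have hXi : (∫ s in a k..t, ‖A s‖) ^ 2 ≤ (t - a k) * ∫ s in a k..t, ‖A s‖ ^ 2 :=
        cs_aux hta (fun x => norm_nonneg _)
          ((hAsub (a k) t h0a hta htT).norm)
          (hf2sub (a k) t h0a hta htT)
      have hXm : (∫ s in a k..t, ‖A s‖ ^ 2) ≤ I := by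
        refine intervalIntegral.integral_mono_interval le_rfl hta htb ?_
          (hf2sub (a k) (a (k + 1)) h0a hab hbT)
        filter_upwards with x
        exact sq_nonneg _
      have hX2 : ‖∫ s in a k..t, A s‖ ^ 2 ≤ (t - a k) * I := by
        have h1 : ‖∫ s in a k..t, A s‖ ^ 2 ≤ (∫ s in a k..t, ‖A s‖) ^ 2 :=
          pow_le_pow_left₀ hX0 hX 2
        nlinarith
      have hY : ‖∫ s in a k..a (k + 1), A s‖ ≤ ∫ s in a k..a (k + 1), ‖A s‖ :=
        intervalIntegral.norm_integral_le_integral_norm hab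
      have hY0 : (0:ℝ) ≤ ‖∫ s in a k..a (k + 1), A s‖ := norm_nonneg _
      have hYi : (∫ s in a k..a (k + 1), ‖A s‖) ^ 2 ≤ (a (k + 1) - a k) * I :=
        cs_aux hab (fun x => norm_nonneg _)
          ((hAsub (a k) (a (k + 1)) h0a hab hbT).norm)
          (hf2sub (a k) (a (k + 1)) h0a hab hbT)
      have hY2 : ‖∫ s in a k..a (k + 1), A s‖ ^ 2 ≤ τ * I := by
        have h1 : ‖∫ s in a k..a (k + 1), A s‖ ^ 2
            ≤ (∫ s in a k..a (k + 1), ‖A s‖) ^ 2 := pow_le_pow_left₀ hY0 hY 2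
        rw [hba] at hYi
        linarith
      have htri : ‖Gk t‖ ≤ ((t - a k) / τ) * ‖∫ s in a k..a (k + 1), A s‖
          + ‖∫ s in a k..t, A s‖ := by
        rw [hGeq]
        refine le_trans (norm_sub_le _ _) ?_
        rw [norm_smul, Real.norm_of_nonneg hc0]
      have hsq : ‖Gk t‖ ^ 2 ≤ (((t - a k) / τ) * ‖∫ s in a k..a (k + 1), A s‖
          + ‖∫ s in a k..t, A s‖) ^ 2 :=
        pow_le_pow_left₀ (norm_nonneg _) htri 2
      nlinarith [sq_nonneg (((t - a k) / τ) * ‖∫ s in a k..a (k + 1), A s‖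
        - ‖∫ s in a k..t, A s‖),
        mul_le_mul_of_nonneg_left hY2 (sq_nonneg ((t - a k) / τ))]
    -- integrate the bound
    have hDint : IntervalIntegrable
        (fun t => 2 * (t - a k) * I + 2 * ((t - a k) / τ) ^ 2 * τ * I)
        volume (a k) (a (k + 1)) := by
      apply Continuous.intervalIntegrable
      fun_prop
    have hmono := intervalIntegral.integral_mono_on hab hHint hDint hpt
    have hDval : (∫ t in a k..a (k + 1),
        (2 * (t - a k) * I + 2 * ((t - a k) / τ) ^ 2 * τ * I))
        = 5 / 3 * τ ^ 2 * I := by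
      have hfe : (fun t => 2 * (t - a k) * I + 2 * ((t - a k) / τ) ^ 2 * τ * I)
          = fun t => (2 * I) * (t - a k) + (2 * I / τ) * (t - a k) ^ 2 := by
        funext t
        field_simp
      rw [hfe]
      have hi1 : IntervalIntegrable (fun t : ℝ => (2 * I) * (t - a k))
          volume (a k) (a (k + 1)) := by
        apply Continuous.intervalIntegrable; fun_prop
      have hi2 : IntervalIntegrable (fun t : ℝ => (2 * I / τ) * (t - a k) ^ 2)
          volume (a k) (a (k + 1)) := by
        apply Continuous.intervalIntegrable; fun_prop
      rw [intervalIntegral.integral_add hi1 hi2,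
        intervalIntegral.integral_const_mul, intervalIntegral.integral_const_mul]
      have e3 : (∫ t in a k..a (k + 1), (t - a k)) = τ ^ 2 / 2 := by
        rw [intervalIntegral.integral_comp_sub_right (fun u => u) (a k)]
        rw [sub_self, hba]
        rw [integral_id]
        ring
      have e4 : (∫ t in a k..a (k + 1), (t - a k) ^ 2) = τ ^ 3 / 3 := by
        rw [intervalIntegral.integral_comp_sub_right (fun u => u ^ 2) (a k)]
        rw [sub_self, hba]
        rw [integral_pow]
        norm_num
      rw [e3, e4]
      field_simp
      ring
    rw [hint_eq]
    calc (∫ t in a k..a (k + 1), ‖Gk t‖ ^ 2)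
        ≤ ∫ t in a k..a (k + 1),
            (2 * (t - a k) * I + 2 * ((t - a k) / τ) ^ 2 * τ * I) := hmono
      _ = 5 / 3 * τ ^ 2 * I := hDval
      _ ≤ 2 * τ ^ 2 * I := by nlinarith [sq_nonneg τ]
  -- assemble
  have ha0 : a 0 = 0 := by simp [ha]
  have haN : a N = T := by simp only [ha]; exact hNτ
  have hsum1 : ∑ k ∈ Finset.range N, ∫ t in a k..a (k + 1), g t
      = ∫ t in (0:ℝ)..T, g t := by
    have h := intervalIntegral.sum_integral_adjacent_intervals
      (f := g) (μ := volume) (a := a) (n := N) (fun k hk => (key k hk).1)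
    rwa [ha0, haN] at h
  have hsum2 : ∑ k ∈ Finset.range N, ∫ s in a k..a (k + 1), ‖A s‖ ^ 2
      = ∫ s in (0:ℝ)..T, ‖A s‖ ^ 2 := by
    have hint : ∀ k < N, IntervalIntegrable (fun s => ‖A s‖ ^ 2) volume (a k) (a (k + 1)) := by
      intro k hk
      have h0a : 0 ≤ a k := by simp only [ha]; positivity
      have hba : a (k + 1) - a k = τ := by simp only [ha]; push_cast; ring
      have hab : a k ≤ a (k + 1) := by linarith
      have hbT : a (k + 1) ≤ T := by
        have hk1 : ((k:ℝ) + 1) ≤ (N : ℝ) := by exact_mod_cast Nat.succ_le_of_lt hk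
        have h2 : a (k + 1) = ((k:ℝ) + 1) * τ := by simp only [ha]; push_cast; ring
        rw [h2, ← hNτ]
        nlinarith
      exact hf2sub (a k) (a (k + 1)) h0a hab hbT
    have h := intervalIntegral.sum_integral_adjacent_intervals
      (f := fun s => ‖A s‖ ^ 2) (μ := volume) (a := a) (n := N) hint
    rwa [ha0, haN] at h
  calc (∫ t in (0:ℝ)..T, g t)
      = ∑ k ∈ Finset.range N, ∫ t in a k..a (k + 1), g t := hsum1.symm
    _ ≤ ∑ k ∈ Finset.range N, 2 * τ ^ 2 * ∫ s in a k..a (k + 1), ‖A s‖ ^ 2 :=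
        Finset.sum_le_sum fun k hk => (key k (Finset.mem_range.1 hk)).2
    _ = 2 * τ ^ 2 * ∑ k ∈ Finset.range N, ∫ s in a k..a (k + 1), ‖A s‖ ^ 2 := by
        rw [Finset.mul_sum]
    _ = 2 * τ ^ 2 * ∫ s in (0:ℝ)..T, ‖A s‖ ^ 2 := by rw [hsum2]
end
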